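/- For σ ∈ S_n, the linear extensions of the poset Φ(σ) correspond bijectively to the permutations τ in the weak Bruhat interval [id, σ]: a permutation τ read in one-line notation gives the linear order τ(1) ≺ τ(2) ≺ … ≺ τ(n), and this linear order extends Φ(σ) if and only if Inv(τ⁻¹) ⊆ Inv(σ⁻¹) (equivalently, τ ≤ σ in the appropriate weak order). -/
import Mathlib

/-- The inversion set of a permutation: pairs `(i, j)` with `i < j` and `σ i > σ j`. -/
def Inversions {n : ℕ} (σ : Equiv.Perm (Fin n)) : Set (Fin n × Fin n) :=
  {p | p.1 < p.2 ∧ σ p.2 < σ p.1}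

/-- A permutation `τ`, read in one-line notation as the linear order
`τ(1) ≺ τ(2) ≺ … ≺ τ(n)` (i.e. `i ≺ j ↔ τ⁻¹ i ≤ τ⁻¹ j`), is a linear extension of
the poset `Φ(σ)` (where `i ≼ j ↔ i ≤ j ∧ σ⁻¹ i ≤ σ⁻¹ j`) if and only if
`Inv(τ⁻¹) ⊆ Inv(σ⁻¹)`. This is the bijection between linear extensions of `Φ(σ)`
and the weak Bruhat interval `[id, σ]`. -/
theorem linear_extension_iff_inv_subset {n : ℕ} (σ τ : Equiv.Perm (Fin n)) :
    (∀ i j : Fin n, i ≤ j → σ⁻¹ i ≤ σ⁻¹ j → τ⁻¹ i ≤ τ⁻¹ j) ↔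
      Inversions τ⁻¹ ⊆ Inversions σ⁻¹ := by
  constructor
  · intro h p hp
    obtain ⟨h1, h2⟩ := hp
    refine ⟨h1, ?_⟩
    by_contra hcon
    push_neg at hcon
    exact absurd (h p.1 p.2 h1.le hcon) (not_le.mpr h2)
  · intro h i j hij hs
    by_contra hcon
    push_neg at hcon
    rcases eq_or_lt_of_le hij with rfl | hlt
    · exact lt_irrefl _ hcon
    · exact absurd (h (show (i, j) ∈ Inversions τ⁻¹ from ⟨hlt, hcon⟩)).2 (not_lt.mpr hs)
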